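/- Let f ∈ ℂ[x₀,x₁,x₂] be a reduced homogeneous polynomial admitting the Jacobian syzygy (0, bx₁, cx₂) with b, c ∈ ℂ nonzero, i.e., bx₁∂₁f + cx₂∂₂f = 0, and suppose ∂₀f = g·x₁ + h·x₂ + ω with g ∈ ℂ[x₀,x₁,x₂], h ∈ ℂ[x₀,x₂], and ω ∈ ℂ[x₀] nonzero, all homogeneous of appropriate degrees. Then h = 0. -/

import Mathlib

open MvPolynomial

lemma pderiv_comm' {σ : Type*} [DecidableEq σ] {R : Type*} [CommRing R]
    (i j : σ) (p : MvPolynomial σ R) :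
    pderiv i (pderiv j p) = pderiv j (pderiv i p) := by
  induction p using MvPolynomial.induction_on' with
  | monomial s a =>
    simp only [pderiv_monomial]
    rcases eq_or_ne i j with rfl | hij
    · rfl
    · rw [tsub_tsub, tsub_tsub, add_comm (Finsupp.single j 1)]
      congr 1
      simp [Finsupp.sub_apply, Finsupp.single_apply, hij, hij.symm]
      ring
  | add p q hp hq => simp [hp, hq]

lemma pderiv_mem_supported {σ : Type*} [DecidableEq σ] {R : Type*} [CommRing R]
    (i : σ) {s : Set σ} {p : MvPolynomial σ R} (hp : p ∈ supported R s) :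
    pderiv i p ∈ supported R s := by
  induction hp using Algebra.adjoin_induction with
  | mem x hx =>
    obtain ⟨j, hj, rfl⟩ := hx
    rcases eq_or_ne j i with rfl | hji
    · simp [pderiv_X_self]
    · rw [pderiv_X_of_ne hji]
      exact Subalgebra.zero_mem _
  | algebraMap r => simp [algebraMap_eq, pderiv_C]
  | add x y hx hy ihx ihy => rw [map_add]; exact Subalgebra.add_mem _ ihx ihy
  | mul x y hx hy ihx ihy =>
    rw [pderiv_mul]
    exact Subalgebra.add_mem _ (Subalgebra.mul_mem _ ihx hy) (Subalgebra.mul_mem _ hx ihy)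

lemma aeval_fix {σ : Type*} {R : Type*} [CommRing R] {s : Set σ}
    (v : σ → MvPolynomial σ R) (hv : ∀ j ∈ s, v j = X j)
    {p : MvPolynomial σ R} (hp : p ∈ supported R s) :
    aeval v p = p := by
  induction hp using Algebra.adjoin_induction with
  | mem x hx => obtain ⟨j, hj, rfl⟩ := hx; simp [hv j hj]
  | algebraMap r => simp [algebraMap_eq]
  | add x y hx hy ihx ihy => rw [map_add, ihx, ihy]
  | mul x y hx hy ihx ihy => rw [map_mul, ihx, ihy]

lemma coeff_X_mul_pderiv {σ : Type*} [DecidableEq σ] {R : Type*} [CommRing R]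
    (i : σ) (m : σ →₀ ℕ) (p : MvPolynomial σ R) :
    coeff m (X i * pderiv i p) = (m i : R) * coeff m p := by
  induction p using MvPolynomial.induction_on' with
  | monomial s a =>
    rw [pderiv_monomial]
    rcases Nat.eq_zero_or_pos (s i) with h0 | hpos
    · rw [h0]
      simp only [Nat.cast_zero, mul_zero, map_zero, mul_zero, coeff_zero, coeff_monomial]
      split_ifs with he
      · subst he; rw [h0]; simp
      · simp
    · have hs : (Finsupp.single i 1) + (s - Finsupp.single i 1) = s := by
        rw [add_comm]
        exact tsub_add_cancel_of_le (by rwa [Finsupp.single_le_iff])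
      rw [X, monomial_mul, one_mul, hs, coeff_monomial, coeff_monomial]
      split_ifs with he
      · subst he; ring
      · simp
  | add p q hp hq => simp [mul_add, hp, hq]

lemma eq_zero_of_self_add_X_mul_pderiv {σ : Type*} [DecidableEq σ] (i : σ)
    (p : MvPolynomial σ ℂ) (hp : p + X i * pderiv i p = 0) : p = 0 := by
  ext m
  have := congrArg (coeff m) hp
  rw [coeff_add, coeff_X_mul_pderiv, coeff_zero] at this
  have h2 : (1 + (m i : ℂ)) * coeff m p = 0 := by ring_nf; linear_combination this
  rcases mul_eq_zero.mp h2 with h | h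
  · have hne : (1 + (m i : ℂ)) ≠ 0 := by
      have : ((1 + m i : ℕ) : ℂ) ≠ 0 := Nat.cast_ne_zero.mpr (by omega)
      simpa using this
    exact absurd h hne
  · simp [h]


/-- If a reduced homogeneous `f` of degree `d` admits the Jacobian syzygy `(0,bx₁,cx₂)`
with `b,c ≠ 0`, and `∂₀f = g·x₁ + h·x₂ + ω` with `h ∈ ℂ[x₀,x₂]`, `ω ∈ ℂ[x₀]` nonzero
(all homogeneous of the appropriate degrees), then `h = 0`. -/
theorem special_linear_syzygy_forces_h_zero
    (d : ℕ) (f : MvPolynomial (Fin 3) ℂ)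
    (hf : f.IsHomogeneous d) (hred : Squarefree f)
    (b c : ℂ) (hb : b ≠ 0) (hc : c ≠ 0)
    (hsyz : C b * X 1 * pderiv 1 f + C c * X 2 * pderiv 2 f = 0)
    (g h ω : MvPolynomial (Fin 3) ℂ)
    (hg : g.IsHomogeneous (d - 2)) (hh : h.IsHomogeneous (d - 2))
    (hω : ω.IsHomogeneous (d - 1))
    (hhsupp : h ∈ MvPolynomial.supported ℂ ({0, 2} : Set (Fin 3)))
    (hωsupp : ω ∈ MvPolynomial.supported ℂ ({0} : Set (Fin 3))) (hωne : ω ≠ 0)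
    (hdecomp : pderiv 0 f = g * X 1 + h * X 2 + ω) :
    h = 0 := by
  -- differentiate the syzygy with respect to x₀
  have E : C b * X 1 * pderiv 0 (pderiv 1 f) + C c * X 2 * pderiv 0 (pderiv 2 f) = 0 := by
    have := congrArg (pderiv 0) hsyz
    simp only [map_add, pderiv_mul, pderiv_C, pderiv_X_of_ne (show (1:Fin 3) ≠ 0 by decide),
      pderiv_X_of_ne (show (2:Fin 3) ≠ 0 by decide), map_zero, zero_mul, mul_zero, add_zero,
      zero_add] at this
    linear_combination this
  -- ∂₂ω = 0
  have hω2 : pderiv 2 ω = 0 := by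
    apply pderiv_eq_zero_of_notMem_vars
    intro hv
    have := (mem_supported.mp hωsupp) hv
    simp at this
  -- ∂₀∂₂f
  have E2 : pderiv 0 (pderiv 2 f) = pderiv 2 g * X 1 + (pderiv 2 h * X 2 + h) := by
    rw [pderiv_comm', hdecomp]
    simp only [map_add, pderiv_mul, pderiv_X_of_ne (show (1:Fin 3) ≠ 2 by decide),
      pderiv_X_self, mul_zero, add_zero, mul_one, hω2]
  rw [E2] at E
  -- substitute x₁ ↦ 0
  set v : Fin 3 → MvPolynomial (Fin 3) ℂ := fun i => if i = 1 then 0 else X i with hv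
  have hvfix : ∀ j ∈ ({0, 2} : Set (Fin 3)), v j = X j := by
    intro j hj
    rcases hj with rfl | rfl <;> simp [hv]
  have E3 := congrArg (aeval v) E
  simp only [map_add, map_mul, map_zero, aeval_X, hv, reduceIte,
    show ((2:Fin 3) = 1) = False by simp, if_false, if_true] at E3
  rw [aeval_fix v hvfix hhsupp, aeval_fix v hvfix (pderiv_mem_supported 2 hhsupp)] at E3
  have hCc : (aeval v) (C c) = C c := by simp
  rw [hCc] at E3
  have E4 : C c * X 2 * (pderiv 2 h * X 2 + h) = 0 := by linear_combination E3
  have E5 : pderiv 2 h * X 2 + h = 0 := by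
    rcases mul_eq_zero.mp E4 with h1 | h1
    · rcases mul_eq_zero.mp h1 with h2 | h2
      · exact absurd h2 (by simpa using hc)
      · exact absurd h2 (X_ne_zero 2)
    · exact h1
  exact eq_zero_of_self_add_X_mul_pderiv 2 h (by linear_combination E5)
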